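/- In MvPolynomial (Fin 2) (ZMod 2) with u = x₀, v = x₁, let A₁ = Algebra.adjoin (ZMod 2) ({u·v} ∪ {u·v·(u^(2^n − 1) + v^(2^n − 1)) : n ≥ 1}) (the subalgebra generated by ι = uv together with all its Milnor images Q_i(ι), defining the unstable algebra H₂), and let A₂ = Algebra.adjoin (ZMod 2) {(u + v)^n · (u·v) : n ≥ 0} (the subalgebra generated by the classes w₁ⁿ·w₂, where w₁ = u + v and w₂ = uv are the images of the universal Stiefel–Whitney classes). Then A₁ ⊆ A₂, and for every x ∈ A₂ there exists k ∈ ℕ with x^(2^k) ∈ A₁; that is, the inclusion A₁ ⊆ A₂ is an F-isomorphism, so the two subalgebras coincide after quadratic/nilpotent closure and both present H₂. -/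

import Mathlib

open MvPolynomial

/-- `A₁`: the subalgebra of `F₂[u,v]` generated by `ι = uv` together with all its
Milnor images `Q_i(ι) = uv (u^{2^n-1} + v^{2^n-1})`, `n ≥ 1`; a presentation of `H₂`. -/
noncomputable def H2gen1 : Subalgebra (ZMod 2) (MvPolynomial (Fin 2) (ZMod 2)) :=
  Algebra.adjoin (ZMod 2)
    ({X 0 * X 1} ∪
      {p | ∃ n : ℕ, 1 ≤ n ∧
        p = X 0 * X 1 * ((X 0 : MvPolynomial (Fin 2) (ZMod 2)) ^ (2 ^ n - 1) +
          (X 1 : MvPolynomial (Fin 2) (ZMod 2)) ^ (2 ^ n - 1))})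

/-- `A₂`: the subalgebra of `F₂[u,v]` generated by the classes `w₁ⁿ w₂`,
`w₁ = u + v`, `w₂ = uv` being the universal Stiefel–Whitney classes. -/
noncomputable def H2gen2 : Subalgebra (ZMod 2) (MvPolynomial (Fin 2) (ZMod 2)) :=
  Algebra.adjoin (ZMod 2)
    {p | ∃ n : ℕ, p = ((X 0 : MvPolynomial (Fin 2) (ZMod 2)) + X 1) ^ n * (X 0 * X 1)}

namespace H2aux

local notation "R2" => MvPolynomial (Fin 2) (ZMod 2)

lemma two_eq_zero : (2 : R2) = 0 := by
  have : ((2:ℕ) : R2) = 0 := CharP.cast_eq_zero _ 2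
  simpa using this

lemma newton (m : ℕ) : (X 0 : R2) ^ (m+2) + X 1 ^ (m+2)
    = (X 0 + X 1) * (X 0 ^ (m+1) + X 1 ^ (m+1)) + X 0 * X 1 * (X 0 ^ m + X 1 ^ m) := by
  linear_combination (-(X 0 * X 1 ^ (m+1) + X 0 ^ (m+1) * X 1)) * two_eq_zero

lemma key (c : ℕ) :
    ((X 0 : R2) ^ (2*c+2) + X 1 ^ (2*c+2)) * (X 0 * X 1) ^ 2
      = ((X 0 + X 1) * (X 0 * X 1)) * (X 0 * X 1 * (X 0 ^ (2*c+1) + X 1 ^ (2*c+1)))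
        + (X 0 * X 1) * (X 0 * X 1 * (X 0 ^ c + X 1 ^ c)) ^ 2 := by
  linear_combination
    (-(X 0 ^ 3 * X 1 ^ 3 * (X 0 ^ (2*c) + X 1 ^ (2*c) + X 0 ^ c * X 1 ^ c))) * two_eq_zero

lemma e2_mem : (X 0 * X 1 : R2) ∈ H2gen1 :=
  Algebra.subset_adjoin (Or.inl rfl)

/-- `uv (u^{2^n-1}+v^{2^n-1}) ∈ A₁` for all `n` (at `n = 0` it vanishes). -/
lemma g_mem (n : ℕ) :
    (X 0 * X 1 * ((X 0 : R2) ^ (2^n - 1) + X 1 ^ (2^n - 1))) ∈ H2gen1 := by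
  rcases Nat.eq_zero_or_pos n with hn | hn
  · subst hn
    have : (X 0 * X 1 * ((X 0 : R2) ^ (2^0 - 1) + X 1 ^ (2^0 - 1))) = 0 := by
      show X 0 * X 1 * ((X 0 : R2) ^ 0 + X 1 ^ 0) = 0
      rw [pow_zero, pow_zero]
      linear_combination (X 0 * X 1 : R2) * two_eq_zero
    rw [this]; exact zero_mem _
  · exact Algebra.subset_adjoin (Or.inr ⟨n, hn, rfl⟩)

lemma e1e2_mem : ((X 0 + X 1) * (X 0 * X 1) : R2) ∈ H2gen1 := by
  have := g_mem 1
  have h : (X 0 * X 1 * ((X 0 : R2) ^ (2^1 - 1) + X 1 ^ (2^1 - 1)))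
      = (X 0 + X 1) * (X 0 * X 1) := by norm_num; ring
  rwa [h] at this

lemma L1 (n : ℕ) : ((X 0 + X 1 : R2)) ^ 2 ^ n * (X 0 * X 1) ^ 2 ∈ H2gen1 := by
  have hf : ((X 0 + X 1 : R2)) ^ 2 ^ n = X 0 ^ 2 ^ n + X 1 ^ 2 ^ n :=
    add_pow_char_pow ..
  rw [hf]
  rcases Nat.eq_zero_or_pos n with hn | hn
  · subst hn
    have h : ((X 0 : R2) ^ 2 ^ 0 + X 1 ^ 2 ^ 0) * (X 0 * X 1) ^ 2
        = ((X 0 + X 1) * (X 0 * X 1)) * (X 0 * X 1) := by norm_num; ring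
    rw [h]; exact mul_mem e1e2_mem e2_mem
  · obtain ⟨n', rfl⟩ : ∃ n', n = n' + 1 := ⟨n - 1, (Nat.succ_pred_eq_of_pos hn).symm⟩
    set c : ℕ := 2 ^ n' - 1 with hc
    have h1 : 2 ^ n' = c + 1 := (Nat.succ_pred_eq_of_pos (Nat.two_pow_pos n')).symm
    have h2 : 2 ^ (n' + 1) = 2*c + 2 := by rw [pow_succ, h1]; ring
    have h3 : 2 ^ (n' + 1) - 1 = 2*c + 1 := by omega
    rw [h2, key c, ← h3, hc]
    exact add_mem (mul_mem e1e2_mem (g_mem (n' + 1))) (mul_mem e2_mem (pow_mem (g_mem n') 2))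

lemma L2 (a : ℕ) : ∃ s : ℕ, ∀ k c : ℕ,
    ((X 0 + X 1 : R2)) ^ (a * 2 ^ k) * (X 0 * X 1) ^ (s + c) ∈ H2gen1 := by
  induction a using Nat.strong_induction_on with
  | _ a ih =>
    rcases Nat.eq_zero_or_pos a with ha | ha
    · subst ha
      refine ⟨1, fun k c => ?_⟩
      simp only [Nat.zero_mul, pow_zero, one_mul]
      exact pow_mem e2_mem _
    · set n : ℕ := Nat.log 2 a with hn
      have hle : 2 ^ n ≤ a := Nat.pow_log_le_self 2 (by omega)
      have hlt : a < 2 ^ (n + 1) := Nat.lt_pow_succ_log_self (by norm_num) a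
      set a' : ℕ := a - 2 ^ n with ha'
      have haa : a = 2 ^ n + a' := by omega
      have ha'lt : a' < a := by
        have : (0:ℕ) < 2 ^ n := Nat.two_pow_pos n
        omega
      obtain ⟨s', hs'⟩ := ih a' ha'lt
      refine ⟨s' + 2, fun k c => ?_⟩
      have harith : a * 2 ^ k = 2 ^ (n + k) + a' * 2 ^ k := by
        rw [haa, pow_add]; ring
      have heq : ((X 0 + X 1 : R2)) ^ (a * 2 ^ k) * (X 0 * X 1) ^ (s' + 2 + c)
          = (((X 0 + X 1 : R2)) ^ 2 ^ (n + k) * (X 0 * X 1) ^ 2)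
            * (((X 0 + X 1 : R2)) ^ (a' * 2 ^ k) * (X 0 * X 1) ^ (s' + c)) := by
        rw [harith, pow_add, pow_add, pow_add]; ring
      rw [heq]
      exact mul_mem (L1 (n + k)) (hs' k c)

/-- Every `u^j v^j... ` of the shape `(u+v)^j · uv · (u^m + v^m)` lies in `A₂`. -/
lemma Qlem : ∀ m j : ℕ,
    ((X 0 + X 1 : R2)) ^ j * (X 0 * X 1) * (X 0 ^ m + X 1 ^ m) ∈ H2gen2 := by
  intro m
  induction m using Nat.strong_induction_on with
  | _ m ih =>
    match m with
    | 0 =>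
      intro j
      have h : ((X 0 + X 1 : R2)) ^ j * (X 0 * X 1) * (X 0 ^ 0 + X 1 ^ 0) = 0 := by
        rw [pow_zero, pow_zero]
        linear_combination ((X 0 + X 1 : R2)) ^ j * (X 0 * X 1) * two_eq_zero
      rw [h]; exact zero_mem _
    | 1 =>
      intro j
      have h : ((X 0 + X 1 : R2)) ^ j * (X 0 * X 1) * (X 0 ^ 1 + X 1 ^ 1)
          = ((X 0 + X 1 : R2)) ^ (j + 1) * (X 0 * X 1) := by ring
      rw [h]
      exact Algebra.subset_adjoin ⟨j + 1, rfl⟩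
    | (m + 2) =>
      intro j
      have h : ((X 0 + X 1 : R2)) ^ j * (X 0 * X 1) * (X 0 ^ (m+2) + X 1 ^ (m+2))
          = ((X 0 + X 1 : R2)) ^ (j+1) * (X 0 * X 1) * (X 0 ^ (m+1) + X 1 ^ (m+1))
            + (X 0 * X 1) * (((X 0 + X 1 : R2)) ^ j * (X 0 * X 1) * (X 0 ^ m + X 1 ^ m)) := by
        rw [newton]; ring
      rw [h]
      exact add_mem (ih (m+1) (by omega) (j+1))
        (mul_mem (Algebra.subset_adjoin ⟨0, by rw [pow_zero, one_mul]⟩) (ih m (by omega) j))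

end H2aux

open H2aux in
theorem H2_presentations_F_isomorphic :
    H2gen1 ≤ H2gen2 ∧
      ∀ x ∈ H2gen2, ∃ k : ℕ, x ^ 2 ^ k ∈ H2gen1 := by
  constructor
  · rw [H2gen1]
    apply Algebra.adjoin_le
    rintro p (rfl | ⟨n, hn, rfl⟩)
    · exact Algebra.subset_adjoin ⟨0, by rw [pow_zero, one_mul]⟩
    · have := Qlem (2 ^ n - 1) 0
      rwa [pow_zero, one_mul] at this
  · intro x hx
    rw [H2gen2] at hx
    induction hx using Algebra.adjoin_induction with
    | mem p hp =>
      obtain ⟨n, rfl⟩ := hp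
      obtain ⟨s, hs⟩ := L2 n
      refine ⟨s, ?_⟩
      have hsle : s ≤ 2 ^ s := Nat.le_of_lt (Nat.lt_two_pow_self (n := s))
      have h : (((X 0 + X 1 : MvPolynomial (Fin 2) (ZMod 2))) ^ n * (X 0 * X 1)) ^ 2 ^ s
          = ((X 0 + X 1)) ^ (n * 2 ^ s) * (X 0 * X 1) ^ (2 ^ s) := by
        rw [mul_pow, ← pow_mul]
      rw [h]
      nth_rewrite 2 [show 2 ^ s = s + (2 ^ s - s) from (Nat.add_sub_cancel' hsle).symm]
      exact hs s (2 ^ s - s)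
    | algebraMap r =>
      exact ⟨0, by simpa using Subalgebra.algebraMap_mem H2gen1 r⟩
    | add x y hx hy ihx ihy =>
      obtain ⟨k1, h1⟩ := ihx
      obtain ⟨k2, h2⟩ := ihy
      refine ⟨k1 + k2, ?_⟩
      have hf : (x + y) ^ 2 ^ (k1 + k2) = x ^ 2 ^ (k1 + k2) + y ^ 2 ^ (k1 + k2) :=
        add_pow_char_pow ..
      rw [hf]
      have hx' : x ^ 2 ^ (k1 + k2) = (x ^ 2 ^ k1) ^ 2 ^ k2 := by
        rw [← pow_mul, pow_add]
      have hy' : y ^ 2 ^ (k1 + k2) = (y ^ 2 ^ k2) ^ 2 ^ k1 := by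
        rw [← pow_mul, pow_add]; ring_nf
      rw [hx', hy']
      exact add_mem (pow_mem h1 _) (pow_mem h2 _)
    | mul x y hx hy ihx ihy =>
      obtain ⟨k1, h1⟩ := ihx
      obtain ⟨k2, h2⟩ := ihy
      refine ⟨k1 + k2, ?_⟩
      rw [mul_pow]
      have hx' : x ^ 2 ^ (k1 + k2) = (x ^ 2 ^ k1) ^ 2 ^ k2 := by
        rw [← pow_mul, pow_add]
      have hy' : y ^ 2 ^ (k1 + k2) = (y ^ 2 ^ k2) ^ 2 ^ k1 := by
        rw [← pow_mul, pow_add]; ring_nf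
      rw [hx', hy']
      exact mul_mem (pow_mem h1 _) (pow_mem h2 _)
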